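/- Let K > 0, t ∈ (0,1), and suppose n = D·K²/(t(1−t)) with D > 9. Then every x ∈ E_{t,K}^n satisfies log Mμ(x) ≥ K²/2 + K²(2t−1)/(6√D) − 4K²D/(√D−3)³, where μ is the counting measure on ℤ^n. -/

import Mathlib

open MeasureTheory Metric Filter ProbabilityTheory
open scoped ENNReal NNReal

/-- The cubic centered Hardy--Littlewood maximal function of a measure `μ` on `ℝ^n`
(with the sup norm, so that `Metric.closedBall x r` is the cube `Q(x,r)` of center `x`
and edge length `2r`). -/
noncomputable def maximalFn {n : ℕ} (μ : Measure (Fin n → ℝ)) (x : Fin n → ℝ) : ℝ≥0∞ :=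
  ⨆ (r : ℝ) (_ : 0 < r), μ (closedBall x r) / volume (closedBall x r)


/-- The counting measure on the integer lattice `ℤ^n ⊂ ℝ^n`:
`μ(A) = card (A ∩ ℤ^n)`. -/
noncomputable def latticeMeasure (n : ℕ) : Measure (Fin n → ℝ) :=
  Measure.sum fun k : Fin n → ℤ => Measure.dirac fun i => (k i : ℝ)


/-- A number `y ∈ [0,1]` is `t`-centered if `(1-t)/2 ≤ y ≤ (1+t)/2`. -/
def tCentered (t y : ℝ) : Prop := (1 - t) / 2 ≤ y ∧ y ≤ (1 + t) / 2


/-- `E_{t,K}^n`: the set of `x ∈ [0,1]^n` with at least `n t + K √(n t (1-t))`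
`t`-centered coordinates. -/
def ESet (n : ℕ) (t K : ℝ) : Set (Fin n → ℝ) :=
  {x | x ∈ Set.Icc 0 1 ∧
    (n : ℝ) * t + K * Real.sqrt (n * t * (1 - t)) ≤ ({i : Fin n | tCentered t (x i)}.ncard : ℝ)}



lemma log_quartic_lb {a : ℝ} (ha : 0 ≤ a) :
    a - a^2/2 + a^3/3 - a^4/4 ≤ Real.log (1+a) := by
  set f : ℝ → ℝ := fun y => Real.log (1+y) - (y - y^2/2 + y^3/3 - y^4/4) with hf
  have hder : ∀ y : ℝ, 0 ≤ y → HasDerivAt f (y^4/(1+y)) y := by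
    intro y hy
    have hy0 : (0:ℝ) < 1 + y := by linarith
    have h1 : HasDerivAt (fun z : ℝ => 1 + z) 1 y := by
      simpa using (hasDerivAt_id y).const_add (1:ℝ)
    have h2 : HasDerivAt (fun z : ℝ => Real.log (1+z)) (1/(1+y)) y := by
      simpa using h1.log hy0.ne'
    have h3 : HasDerivAt (fun z : ℝ => z - z^2/2 + z^3/3 - z^4/4)
        (1 - y + y^2 - y^3) y := by
      have h := (((hasDerivAt_id y).sub ((hasDerivAt_pow 2 y).div_const 2)).add
        ((hasDerivAt_pow 3 y).div_const 3)).sub ((hasDerivAt_pow 4 y).div_const 4)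
      refine h.congr_deriv ?_
      push_cast
      ring
    have h4 := h2.sub h3
    refine h4.congr_deriv ?_
    field_simp
    ring
  have hmono : MonotoneOn f (Set.Ici (0:ℝ)) := by
    apply monotoneOn_of_deriv_nonneg (convex_Ici 0)
    · intro y hy
      exact ((hder y hy).continuousAt).continuousWithinAt
    · intro y hy
      rw [interior_Ici] at hy
      exact (hder y (le_of_lt hy)).differentiableAt.differentiableWithinAt
    · intro y hy
      rw [interior_Ici] at hy
      rw [(hder y (le_of_lt hy)).deriv]
      have hy' : (0:ℝ) < y := hy
      exact div_nonneg (pow_nonneg hy'.le 4) (by linarith)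
  have h0 : f 0 ≤ f a := hmono (by simp) (by simpa using ha) ha
  simp only [hf] at h0
  norm_num at h0
  linarith

lemma log_interp {t a : ℝ} (ht0 : 0 ≤ t) (ht1 : t ≤ 1) (ha : 0 ≤ a) :
    Real.log (1 + t*a) ≤ t * Real.log (1+a)
      + t*(1-t)*(a^2/2 - (1+t)*a^3/3 + (1+t+t^2)*a^4/4) := by
  have h1t : (0:ℝ) ≤ 1 - t := by linarith
  set f : ℝ → ℝ := fun y => t * Real.log (1+y) - Real.log (1+t*y)
      + t*(1-t)*(y^2/2 - (1+t)*y^3/3 + (1+t+t^2)*y^4/4) with hf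
  have hder : ∀ y : ℝ, 0 ≤ y → HasDerivAt f
      (t*(1-t)*y*((1+t)*(1+t^2)*y^3 + t*(1+t+t^2)*y^4) / ((1+y)*(1+t*y))) y := by
    intro y hy
    have hy0 : (0:ℝ) < 1 + y := by linarith
    have hty0 : (0:ℝ) < 1 + t*y := by nlinarith
    have h1 : HasDerivAt (fun z : ℝ => 1 + z) 1 y := by
      simpa using (hasDerivAt_id y).const_add (1:ℝ)
    have h2 : HasDerivAt (fun z : ℝ => Real.log (1+z)) (1/(1+y)) y := by
      simpa using h1.log hy0.ne'
    have h1' : HasDerivAt (fun z : ℝ => 1 + t*z) t y := by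
      simpa using ((hasDerivAt_id y).const_mul t).const_add (1:ℝ)
    have h2' : HasDerivAt (fun z : ℝ => Real.log (1+t*z)) (t/(1+t*y)) y := by
      simpa using h1'.log hty0.ne'
    have h3 : HasDerivAt (fun z : ℝ => z^2/2 - (1+t)*z^3/3 + (1+t+t^2)*z^4/4)
        (y - (1+t)*y^2 + (1+t+t^2)*y^3) y := by
      have h := (((hasDerivAt_pow 2 y).div_const 2).sub
        (((hasDerivAt_pow 3 y).const_mul (1+t)).div_const 3)).add
        (((hasDerivAt_pow 4 y).const_mul (1+t+t^2)).div_const 4)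
      refine h.congr_deriv ?_
      push_cast
      ring
    have h4 := ((h2.const_mul t).sub h2').add ((h3.const_mul (t*(1-t))))
    refine h4.congr_deriv ?_
    field_simp
    ring
  have hmono : MonotoneOn f (Set.Ici (0:ℝ)) := by
    apply monotoneOn_of_deriv_nonneg (convex_Ici 0)
    · intro y hy
      exact ((hder y hy).continuousAt).continuousWithinAt
    · intro y hy
      rw [interior_Ici] at hy
      exact (hder y (le_of_lt hy)).differentiableAt.differentiableWithinAt
    · intro y hy
      rw [interior_Ici] at hy
      rw [(hder y (le_of_lt hy)).deriv]
      have hy' : 0 ≤ y := le_of_lt hy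
      have ht2 : (0:ℝ) ≤ t^2 := sq_nonneg t
      have h3 : (0:ℝ) ≤ y^3 := pow_nonneg hy' 3
      have h4 : (0:ℝ) ≤ y^4 := pow_nonneg hy' 4
      apply div_nonneg
      · have a1 : (0:ℝ) ≤ (1+t)*(1+t^2)*y^3 :=
          mul_nonneg (mul_nonneg (by linarith) (by linarith)) h3
        have a2 : (0:ℝ) ≤ t*(1+t+t^2)*y^4 :=
          mul_nonneg (mul_nonneg ht0 (by linarith)) h4
        have a3 := mul_nonneg (mul_nonneg (mul_nonneg ht0 h1t) hy') (by linarith : (0:ℝ) ≤ (1+t)*(1+t^2)*y^3 + t*(1+t+t^2)*y^4)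
        linarith
      · have := mul_nonneg ht0 hy'
        nlinarith
  have h0 : f 0 ≤ f a := hmono (by simp) (by simpa using ha) ha
  simp only [hf] at h0
  norm_num at h0
  linarith

lemma star_ineq {s : ℝ} (hs : 3 < s) :
    (s^2+s)/(2*(s-2)^2) + (3*s^2+s)/(4*(s-2)^4)
      ≤ 1/2 + 1/(2*s) + 1/(3*s^2) + 4*s^2/(s-3)^3 := by
  have hu : (0:ℝ) < s - 3 := by linarith
  have hv : (0:ℝ) < s - 2 := by linarith
  have hs0 : (0:ℝ) < s := by linarith
  have key : (1/2 + 1/(2*s) + 1/(3*s^2) + 4*s^2/(s-3)^3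
      - ((s^2+s)/(2*(s-2)^2) + (3*s^2+s)/(4*(s-2)^4)))
      * (12*s^2*(s-2)^4*(s-3)^3)
      = 3888 + 20736*(s-3) + 46656*(s-3)^2 + 56218*(s-3)^3 + 39715*(s-3)^4
        + 16671*(s-3)^5 + 4009*(s-3)^6 + 499*(s-3)^7 + 24*(s-3)^8 := by
    field_simp
    ring
  have hpoly : (0:ℝ) ≤ 3888 + 20736*(s-3) + 46656*(s-3)^2 + 56218*(s-3)^3 + 39715*(s-3)^4
        + 16671*(s-3)^5 + 4009*(s-3)^6 + 499*(s-3)^7 + 24*(s-3)^8 := by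
    have h2 := pow_nonneg hu.le 2
    have h3 := pow_nonneg hu.le 3
    have h4 := pow_nonneg hu.le 4
    have h5 := pow_nonneg hu.le 5
    have h6 := pow_nonneg hu.le 6
    have h7 := pow_nonneg hu.le 7
    have h8 := pow_nonneg hu.le 8
    nlinarith [hu.le]
  have hm : (0:ℝ) < 12*s^2*(s-2)^4*(s-3)^3 := by positivity
  nlinarith [key, hpoly, hm]

set_option maxHeartbeats 1000000 in
lemma F_bound {s t a : ℝ} (hs : 3 < s) (ht0 : 0 ≤ t) (ht1 : t ≤ 1)
    (ha1 : 1/s ≤ a) (ha2 : a ≤ 1/(s-2)) :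
    1/2 + (2*t-1)/(6*s) - 4*s^2/(s-3)^3 ≤
      s*(a - a^2/2 + a^3/3 - a^4/4) - s^2*(a^2/2 - (1+t)*a^3/3 + (1+t+t^2)*a^4/4) := by
  have hs0 : (0:ℝ) < s := by linarith
  have hv : (0:ℝ) < s - 2 := by linarith
  have ha0 : (0:ℝ) < a := lt_of_lt_of_le (by positivity) ha1
  have ht2 : (0:ℝ) ≤ t^2 := sq_nonneg t
  -- term bounds
  have h1 : (1:ℝ) ≤ s * a := by
    calc (1:ℝ) = s * (1/s) := by field_simp
    _ ≤ s * a := by nlinarith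
  have ha2sq : a^2 ≤ (1/(s-2))^2 := by nlinarith
  have ha4 : a^4 ≤ (1/(s-2))^4 := by nlinarith [sq_nonneg (a^2 - (1/(s-2))^2), pow_nonneg ha0.le 2]
  have ha3 : (1/s)^3 ≤ a^3 := by nlinarith [sq_nonneg (a - 1/s), sq_nonneg (a + 1/s), mul_pos ha0 ha0]
  have h2 : (s^2+s)*a^2/2 ≤ (s^2+s)/(2*(s-2)^2) := by
    rw [div_le_div_iff₀ (by norm_num) (by positivity)]
    have : (0:ℝ) ≤ s^2 + s := by positivity
    have h := mul_le_mul_of_nonneg_left ha2sq this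
    have e : (1/(s-2))^2 = 1/(s-2)^2 := by field_simp
    rw [e] at h
    have h2' : (s^2+s) * (1/(s-2)^2) * (2*(s-2)^2) = (s^2+s) * 2 := by field_simp
    nlinarith [h, sq_nonneg (s-2)]
  have h3 : (s^2*(1+t)+s)/(3*s^3) ≤ (s^2*(1+t)+s)*a^3/3 := by
    have hc : (0:ℝ) ≤ s^2*(1+t)+s := by positivity
    rw [div_le_div_iff₀ (by positivity) (by norm_num)]
    have h := mul_le_mul_of_nonneg_left ha3 hc
    have e : (1/s)^3 = 1/s^3 := by field_simp
    rw [e] at h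
    have : (s^2*(1+t)+s) * (1/s^3) * (3*s^3) = (s^2*(1+t)+s) * 3 := by field_simp
    nlinarith [h, pow_pos hs0 3]
  have h4 : (s^2*(1+t+t^2)+s)*a^4/4 ≤ (3*s^2+s)/(4*(s-2)^4) := by
    have htq : t^2 ≤ 1 := by nlinarith
    have hc1 : s^2*(1+t+t^2)+s ≤ 3*s^2+s := by
      have := mul_le_mul_of_nonneg_left (show t+t^2 ≤ 2 by linarith) (sq_nonneg s)
      nlinarith
    have ha40 : (0:ℝ) ≤ a^4 := by positivity
    have step1 : (s^2*(1+t+t^2)+s)*a^4 ≤ (3*s^2+s)*a^4 :=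
      mul_le_mul_of_nonneg_right hc1 ha40
    have step2 : (3*s^2+s)*a^4 ≤ (3*s^2+s)*(1/(s-2))^4 :=
      mul_le_mul_of_nonneg_left ha4 (by positivity)
    have e : (3*s^2+s)*(1/(s-2))^4 = (3*s^2+s)/(s-2)^4 := by field_simp
    rw [e] at step2
    have e2 : (3*s^2+s)/(s-2)^4 / 4 = (3*s^2+s)/(4*(s-2)^4) := by
      rw [div_div, mul_comm ((s-2:ℝ)^4) 4]
    calc (s^2*(1+t+t^2)+s)*a^4/4 ≤ (3*s^2+s)/(s-2)^4 / 4 := by linarith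
    _ = (3*s^2+s)/(4*(s-2)^4) := e2
  have hstar := star_ineq hs
  -- t-identities
  have id1 : (s^2*(1+t)+s)/(3*s^3) = (1+t)/(3*s) + 1/(3*s^2) := by
    field_simp
  have id2 : (2*t-1)/(6*s) = (1+t)/(3*s) - 1/(2*s) := by
    field_simp
    ring
  have main : s*(a - a^2/2 + a^3/3 - a^4/4) - s^2*(a^2/2 - (1+t)*a^3/3 + (1+t+t^2)*a^4/4)
      = s*a - (s^2+s)*a^2/2 + (s^2*(1+t)+s)*a^3/3 - (s^2*(1+t+t^2)+s)*a^4/4 := by ring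
  rw [main, id2]
  rw [id1] at h3
  linarith

set_option maxHeartbeats 1600000 in
theorem log_maximal_lower_bound (n : ℕ) (K t D : ℝ) (hK : 0 < K) (ht0 : 0 < t) (ht1 : t < 1)
    (hD : 9 < D) (hn : (n : ℝ) = D * K ^ 2 / (t * (1 - t))) :
    ∀ x ∈ ESet n t K,
      ENNReal.ofReal (Real.exp (K ^ 2 / 2 + K ^ 2 * (2 * t - 1) / (6 * Real.sqrt D)
        - 4 * K ^ 2 * D / (Real.sqrt D - 3) ^ 3)) ≤ maximalFn (latticeMeasure n) x := by
  classical
  intro x hx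
  obtain ⟨hx01, hxcard⟩ := hx
  have ht1' : (0:ℝ) < 1 - t := by linarith
  have htt : (0:ℝ) < t * (1 - t) := mul_pos ht0 ht1'
  have hD0 : (0:ℝ) < D := by linarith
  have hK2 : (0:ℝ) < K ^ 2 := by positivity
  set s := Real.sqrt D with hs_def
  have hs2 : s ^ 2 = D := Real.sq_sqrt hD0.le
  have hs3 : (3:ℝ) < s := by
    nlinarith [Real.sqrt_nonneg D]
  have hs0 : (0:ℝ) < s := by linarith
  have hn_pos : (0:ℝ) < (n:ℝ) := by rw [hn]; positivity
  have hnt : (n:ℝ) * t * (1 - t) = D * K ^ 2 := by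
    rw [hn]; field_simp
  have hsqrt : Real.sqrt ((n:ℝ) * t * (1 - t)) = s * K := by
    rw [hnt, hs_def, Real.sqrt_mul hD0.le, Real.sqrt_sq hK.le]
  -- integer parameters
  set N : ℕ := ⌊(s - 1) / 2⌋₊ with hN_def
  set L : ℝ := 2 * (N:ℝ) + 1 with hL_def
  have hL_le : L ≤ s := by
    have h := Nat.floor_le (show (0:ℝ) ≤ (s-1)/2 by linarith)
    rw [hL_def]; rw [hN_def]; linarith
  have hL_gt : s - 2 < L := by
    have h := Nat.lt_floor_add_one ((s-1)/2)
    rw [hL_def]; rw [hN_def]; linarith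
  have hL1 : (1:ℝ) < L := by linarith
  have hL0 : (0:ℝ) < L := by linarith
  set r : ℝ := (N:ℝ) + (1 + t)/2 with hr_def
  have hr0 : (0:ℝ) < r := by rw [hr_def]; positivity
  have h2r : 2 * r = L + t := by rw [hr_def, hL_def]; ring
  -- the integer boxes
  set T : Fin n → Finset ℤ := fun i => Finset.Icc ⌈x i - r⌉ ⌊x i + r⌋ with hT_def
  have hcard_ge : ∀ i, 2*N + 1 ≤ (T i).card := by
    intro i
    rw [hT_def]
    rw [Int.card_Icc]
    have hc1 : (⌈x i - r⌉ : ℝ) < x i - r + 1 := Int.ceil_lt_add_one _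
    have hc2 : x i + r - 1 < (⌊x i + r⌋ : ℝ) := Int.sub_one_lt_floor _
    have hkey : (2*(N:ℤ)) < ⌊x i + r⌋ + 1 - ⌈x i - r⌉ := by
      have : ((2*(N:ℤ) : ℤ) : ℝ) < ((⌊x i + r⌋ + 1 - ⌈x i - r⌉ : ℤ) : ℝ) := by
        push_cast
        rw [hr_def] at hc1 hc2 ⊢
        linarith
      exact_mod_cast this
    omega
  have hcard_centered : ∀ i, tCentered t (x i) → 2*N + 2 ≤ (T i).card := by
    intro i hi
    obtain ⟨hi1, hi2⟩ := hi
    rw [hT_def]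
    rw [Int.card_Icc]
    have h1 : ⌈x i - r⌉ ≤ -(N:ℤ) := by
      apply Int.ceil_le.mpr
      push_cast
      rw [hr_def]
      linarith
    have h2 : ((N:ℤ) + 1) ≤ ⌊x i + r⌋ := by
      apply Int.le_floor.mpr
      push_cast
      rw [hr_def]
      linarith
    omega
  -- membership of lattice points in the cube
  have hmem : ∀ k : Fin n → ℤ, k ∈ Fintype.piFinset T →
      (fun i => (k i : ℝ)) ∈ closedBall x r := by
    intro k hk
    rw [mem_closedBall, dist_pi_le_iff hr0.le]
    intro i
    have hki : k i ∈ T i := Fintype.mem_piFinset.mp hk i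
    rw [hT_def] at hki
    rw [Finset.mem_Icc] at hki
    have hlow : x i - r ≤ (k i : ℝ) := by
      have := Int.le_ceil (x i - r)
      have h2 : ((⌈x i - r⌉ : ℤ) : ℝ) ≤ (k i : ℝ) := Int.cast_le.mpr hki.1
      linarith
    have hhigh : (k i : ℝ) ≤ x i + r := by
      have := Int.floor_le (x i + r)
      have h2 : ((k i : ℤ) : ℝ) ≤ ((⌊x i + r⌋ : ℤ) : ℝ) := Int.cast_le.mpr hki.2
      linarith
    rw [Real.dist_eq, abs_le]
    constructor <;> linarith
  -- measure lower bound
  have hQmeas : MeasurableSet (closedBall x r) := measurableSet_closedBall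
  set S : Finset (Fin n → ℤ) := Fintype.piFinset T with hS_def
  have hμ : (S.card : ℝ≥0∞) ≤ latticeMeasure n (closedBall x r) := by
    rw [latticeMeasure, Measure.sum_apply _ hQmeas]
    calc (S.card : ℝ≥0∞) = ∑ _k ∈ S, 1 := by simp
    _ = ∑ k ∈ S, Measure.dirac (fun i => (k i : ℝ)) (closedBall x r) := by
        refine Finset.sum_congr rfl fun k hk => ?_
        rw [Measure.dirac_apply' _ hQmeas, Set.indicator_of_mem (hmem k hk)]
        rfl
    _ ≤ ∑' k : Fin n → ℤ, Measure.dirac (fun i => (k i : ℝ)) (closedBall x r) :=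
        ENNReal.sum_le_tsum S
  have hvol : volume (closedBall x r) = ENNReal.ofReal ((L + t)^n) := by
    rw [Real.volume_pi_closedBall x hr0.le, h2r, Fintype.card_fin]
  -- centered coordinates
  have hfin : {i : Fin n | tCentered t (x i)}.Finite := Set.toFinite _
  set C : Finset (Fin n) := hfin.toFinset with hC_def
  set m : ℕ := C.card with hm_def
  have hm_n : m ≤ n := by
    have := Finset.card_le_univ C
    rw [Fintype.card_fin] at this
    exact this
  have hmlow : (n:ℝ) * t + K^2 * s ≤ (m:ℝ) := by
    rw [hsqrt] at hxcard
    rw [Set.ncard_eq_toFinset_card _ hfin] at hxcard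
    rw [hm_def, hC_def]
    nlinarith [hxcard]
  -- counting
  have hcount : ((2*N+2)^m * (2*N+1)^(n - m) : ℕ) ≤ S.card := by
    rw [hS_def, Fintype.card_piFinset]
    calc (2*N+2)^m * (2*N+1)^(n-m)
        = (∏ _i ∈ C, (2*N+2)) * ∏ _i ∈ Cᶜ, (2*N+1) := by
          rw [Finset.prod_const, Finset.prod_const, Finset.card_compl, Fintype.card_fin,
            hm_def]
    _ ≤ (∏ i ∈ C, (T i).card) * ∏ i ∈ Cᶜ, (T i).card := by
        apply Nat.mul_le_mul
        · apply Finset.prod_le_prod'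
          intro i hi
          apply hcard_centered i
          rw [hC_def] at hi
          exact (Set.Finite.mem_toFinset hfin).mp hi
        · apply Finset.prod_le_prod'
          intro i _
          exact hcard_ge i
    _ = ∏ i, (T i).card := Finset.prod_mul_prod_compl C _
  -- from masses to the maximal function
  have hmax : latticeMeasure n (closedBall x r) / volume (closedBall x r)
      ≤ maximalFn (latticeMeasure n) x := by
    unfold maximalFn
    exact le_iSup₂_of_le r hr0 le_rfl
  -- the real-valued estimate
  set a : ℝ := 1/L with ha_def
  have ha0 : (0:ℝ) < a := by rw [ha_def]; positivity
  set A : ℝ := (L+1)^m * L^(n-m) with hA_def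
  have hA_pos : (0:ℝ) < A := by rw [hA_def]; positivity
  have hV_pos : (0:ℝ) < (L+t)^n := by positivity
  have hAcast : (((2*N+2)^m * (2*N+1)^(n-m) : ℕ) : ℝ) = A := by
    rw [hA_def, hL_def]
    push_cast
    ring
  have hElog : K ^ 2 / 2 + K ^ 2 * (2 * t - 1) / (6 * s)
      - 4 * K ^ 2 * (s^2) / (s - 3) ^ 3 ≤ Real.log (A / (L+t)^n) := by
    have e1 : (1:ℝ) + a = (L+1)/L := by rw [ha_def]; field_simp
    have e2 : (1:ℝ) + t*a = (L+t)/L := by rw [ha_def]; field_simp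
    have hlog1 : Real.log (1+a) = Real.log (L+1) - Real.log L := by
      rw [e1, Real.log_div (by linarith) hL0.ne']
    have hlog2 : Real.log (1+t*a) = Real.log (L+t) - Real.log L := by
      rw [e2, Real.log_div (by linarith) hL0.ne']
    have hAV : Real.log (A / (L+t)^n)
        = (m:ℝ) * Real.log (1+a) - (n:ℝ) * Real.log (1+t*a) := by
      rw [Real.log_div hA_pos.ne' hV_pos.ne', hA_def,
        Real.log_mul (by positivity) (by positivity),
        Real.log_pow, Real.log_pow, Real.log_pow,
        Nat.cast_sub hm_n, hlog1, hlog2]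
      ring
    rw [hAV]
    have hla : (0:ℝ) < Real.log (1+a) := Real.log_pos (by linarith)
    have hBond := log_interp ht0.le ht1.le ha0.le
    have hA4 := log_quartic_lb ha0.le
    have hs1 : 1/s ≤ a := by
      rw [ha_def]
      exact one_div_le_one_div_of_le hL0 hL_le
    have hs2' : a ≤ 1/(s-2) := by
      rw [ha_def]
      exact one_div_le_one_div_of_le (by linarith) hL_gt.le
    have hF := F_bound hs3 ht0.le ht1.le hs1 hs2'
    have step1 : ((n:ℝ)*t + K^2*s) * Real.log (1+a) ≤ (m:ℝ) * Real.log (1+a) :=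
      mul_le_mul_of_nonneg_right hmlow hla.le
    have step2 : (n:ℝ) * Real.log (1+t*a)
        ≤ (n:ℝ) * (t * Real.log (1+a)
            + t*(1-t)*(a^2/2 - (1+t)*a^3/3 + (1+t+t^2)*a^4/4)) :=
      mul_le_mul_of_nonneg_left hBond hn_pos.le
    have hq : (n:ℝ) * (t*(1-t)*(a^2/2 - (1+t)*a^3/3 + (1+t+t^2)*a^4/4))
        = s^2*K^2*(a^2/2 - (1+t)*a^3/3 + (1+t+t^2)*a^4/4) := by
      have hnn : (n:ℝ) * (t*(1-t)) = s^2*K^2 := by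
        rw [hs2]
        linarith [hnt]
      rw [show (n:ℝ) * (t*(1-t)*(a^2/2 - (1+t)*a^3/3 + (1+t+t^2)*a^4/4))
        = ((n:ℝ) * (t*(1-t))) * (a^2/2 - (1+t)*a^3/3 + (1+t+t^2)*a^4/4) from by ring, hnn]
    have step3 : K^2*s*(a - a^2/2 + a^3/3 - a^4/4) ≤ K^2*s*Real.log (1+a) :=
      mul_le_mul_of_nonneg_left hA4 (by positivity)
    have hFk := mul_le_mul_of_nonneg_left hF hK2.le
    have hc : K ^ 2 / 2 + K ^ 2 * (2 * t - 1) / (6 * s) - 4 * K ^ 2 * (s^2) / (s - 3) ^ 3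
        = K^2 * (1/2 + (2*t-1)/(6*s) - 4*s^2/(s-3)^3) := by
      ring
    rw [hc]
    linarith [step1, step2, hq, step3, hFk]
  -- wrap up
  have hreal : Real.exp (K ^ 2 / 2 + K ^ 2 * (2 * t - 1) / (6 * s)
      - 4 * K ^ 2 * (s^2) / (s - 3) ^ 3) ≤ A / (L+t)^n := by
    rw [← Real.exp_log (show (0:ℝ) < A/(L+t)^n by positivity)]
    exact Real.exp_le_exp.mpr hElog
  have hgoal : (K ^ 2 / 2 + K ^ 2 * (2 * t - 1) / (6 * s)
      - 4 * K ^ 2 * D / (s - 3) ^ 3)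
      = (K ^ 2 / 2 + K ^ 2 * (2 * t - 1) / (6 * s)
      - 4 * K ^ 2 * (s^2) / (s - 3) ^ 3) := by rw [hs2]
  rw [hgoal]
  calc ENNReal.ofReal (Real.exp (K ^ 2 / 2 + K ^ 2 * (2 * t - 1) / (6 * s)
      - 4 * K ^ 2 * (s^2) / (s - 3) ^ 3))
      ≤ ENNReal.ofReal (A / (L+t)^n) := ENNReal.ofReal_le_ofReal hreal
    _ = ENNReal.ofReal A / ENNReal.ofReal ((L+t)^n) := ENNReal.ofReal_div_of_pos hV_pos
    _ ≤ (S.card : ℝ≥0∞) / ENNReal.ofReal ((L+t)^n) := by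
        apply ENNReal.div_le_div_right
        rw [← hAcast, ENNReal.ofReal_natCast]
        exact Nat.cast_le.mpr hcount
    _ ≤ latticeMeasure n (closedBall x r) / volume (closedBall x r) := by
        rw [hvol]
        exact ENNReal.div_le_div_right hμ _
    _ ≤ maximalFn (latticeMeasure n) x := hmax
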